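/- Every member of the behavioral naturals is observationally equivalent to a standard numeral: for the program P containing {Zero.z.s → z, S.x.z.s → s.x}, define ⟦ℕ⟧ as the least set of terms such that M ∈ ⟦ℕ⟧ iff either (∀ z s, M.z.s →* z) or (∃ x ∈ ⟦ℕ⟧, ∀ z s, M.z.s →* s.x). Then for every M ∈ ⟦ℕ⟧ there exists a natural number k with M ≈_P ⟨k⟩, where ⟨0⟩ = Zero and ⟨k+1⟩ = S.⟨k⟩. -/

import Mathlib

/-- Terms of continuation calculus: names (coded as naturals) and dot. -/
inductive Tm where
  | name : ℕ → Tm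
  | dot : Tm → Tm → Tm
deriving DecidableEq

/-- Right-hand sides of rules: names, variables (de Bruijn-style indices
into the left-hand side's variable list), and dot. -/
inductive Rhs where
  | name : ℕ → Rhs
  | var : ℕ → Rhs
  | dot : Rhs → Rhs → Rhs
deriving DecidableEq

/-- A rule `n.x₁.⋯.xₖ → r`: head name, arity `k`, and right-hand side. -/
structure Rule where
  head : ℕ
  arity : ℕ
  rhs : Rhs
deriving DecidableEq

/-- A program is a finite set of rules. -/
abbrev Program := Finset Rule

/-- Variables occurring in a right-hand side. -/
def Rhs.HasVar : Rhs → ℕ → Prop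
  | .name _, _ => False
  | .var w, v => w = v
  | .dot a b, v => a.HasVar v ∨ b.HasVar v

/-- Well-formedness: every variable of a right-hand side occurs in the
left-hand side, and there is at most one rule per head name. -/
def Program.Wf (P : Program) : Prop :=
  (∀ r ∈ P, ∀ v, r.rhs.HasVar v → v < r.arity) ∧
  (∀ r₁ ∈ P, ∀ r₂ ∈ P, r₁.head = r₂.head → r₁ = r₂)

/-- `n.t₁.⋯.tₖ` : left-associated application of a term to a list of terms. -/
def Tm.apps : Tm → List Tm → Tm
  | h, [] => h
  | h, t :: ts => Tm.apps (h.dot t) ts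

/-- Instantiation of a right-hand side with the terms matched by the
left-hand side variables; fails if some variable is out of range. -/
def Rhs.inst (ts : List Tm) : Rhs → Option Tm
  | .name n => some (.name n)
  | .var v => ts[v]?
  | .dot a b => do pure (.dot (← a.inst ts) (← b.inst ts))

/-- One-step evaluation `M →_P N`. -/
def Step (P : Program) (M N : Tm) : Prop :=
  ∃ r ∈ P, ∃ ts : List Tm, ts.length = r.arity ∧
    M = Tm.apps (.name r.head) ts ∧ r.rhs.inst ts = some N

/-- Multi-step evaluation `M →*_P N`. -/
def Steps (P : Program) : Tm → Tm → Prop := Relation.ReflTransGen (Step P)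

/-- `M` is final: it has no successor. -/
def Final (P : Program) (M : Tm) : Prop := ¬ ∃ N, Step P M N

/-- `M` terminates: it evaluates to a final term. -/
def Terminates (P : Program) (M : Tm) : Prop := ∃ N, Steps P M N ∧ Final P N

/-- The name `m` occurs in a term. -/
def Tm.HasName (m : ℕ) : Tm → Prop
  | .name n => n = m
  | .dot a b => a.HasName m ∨ b.HasName m

/-- The name `m` occurs in a right-hand side. -/
def Rhs.HasName (m : ℕ) : Rhs → Prop
  | .name n => n = m
  | .var _ => False
  | .dot a b => a.HasName m ∨ b.HasName m

/-- The name `m` occurs (is mentioned) in a program. -/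
def Program.HasName (P : Program) (m : ℕ) : Prop :=
  ∃ r ∈ P, r.head = m ∨ r.rhs.HasName m

/-- The name `m` is defined by the program (is the head of some rule). -/
def Program.Defines (P : Program) (m : ℕ) : Prop :=
  ∃ r ∈ P, r.head = m

/-- Substitution of a term for a name, `M[fr := t]`. -/
def Tm.subName (m : ℕ) (t : Tm) : Tm → Tm
  | .name n => if n = m then t else .name n
  | .dot a b => .dot (Tm.subName m t a) (Tm.subName m t b)

/-- Common reduct relation `M =_P N`. -/
def CommonRed (P : Program) (M N : Tm) : Prop :=
  ∃ t, Steps P M t ∧ Steps P N t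

/-- Observational equivalence `M ≈_P N`. -/
def ObsEq (P : Program) (M N : Tm) : Prop :=
  ∀ P' : Program, P'.Wf → P ⊆ P' →
    ∀ X : Tm, (Terminates P' (X.dot M) ↔ Terminates P' (X.dot N))

/-- Renaming of names in a term. -/
def Tm.rename (f : ℕ → ℕ) : Tm → Tm
  | .name n => .name (f n)
  | .dot a b => .dot (a.rename f) (b.rename f)

/-- Renaming of names in a right-hand side. -/
def Rhs.rename (f : ℕ → ℕ) : Rhs → Rhs
  | .name n => .name (f n)
  | .var v => .var v
  | .dot a b => .dot (a.rename f) (b.rename f)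

/-- Renaming of names in a rule. -/
def Rule.rename (f : ℕ → ℕ) (r : Rule) : Rule :=
  ⟨f r.head, r.arity, r.rhs.rename f⟩

/-- Renaming of names in a program. -/
def Program.rename (f : ℕ → ℕ) (P : Program) : Program :=
  P.image (Rule.rename f)

/-- The fresh substitution `[n⃗ := m⃗]` as a function on names. -/
def renFun (ns ms : List ℕ) (n : ℕ) : ℕ :=
  ((ns.zip ms).lookup n).getD n

/-- `M` has arity `k` under `P`: `M = n.q₁.⋯.qᵢ` where `n` has a rule of
arity `i + k`. -/
def Tm.ArityIs (P : Program) (M : Tm) (k : ℕ) : Prop :=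
  ∃ r ∈ P, ∃ ts : List Tm, M = Tm.apps (.name r.head) ts ∧ ts.length + k = r.arity

/-- The rule `Zero.z.s → z`, with `Zero` coded as name `0`. -/
def zeroRule : Rule := ⟨0, 2, Rhs.var 0⟩

/-- The rule `S.x.z.s → s.x`, with `S` coded as name `1`. -/
def succRule : Rule := ⟨1, 3, Rhs.dot (.var 2) (.var 0)⟩

/-- The standard numeral `⟨k⟩`: `⟨0⟩ = Zero`, `⟨k+1⟩ = S.⟨k⟩`. -/
def numeral : ℕ → Tm
  | 0 => .name 0
  | k + 1 => (Tm.name 1).dot (numeral k)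

/-- The behavioral naturals `⟦ℕ⟧`: least set of terms `M` such that either
`M.z.s →* z` for all `z, s`, or there is an `x ∈ ⟦ℕ⟧` with
`M.z.s →* s.x` for all `z, s`. -/
inductive BehNat (P : Program) : Tm → Prop
  | zero (M : Tm) (h : ∀ z s : Tm, Steps P ((M.dot z).dot s) z) : BehNat P M
  | succ (M x : Tm) (hx : BehNat P x)
      (h : ∀ z s : Tm, Steps P ((M.dot z).dot s) (s.dot x)) : BehNat P M

/-! ### Basic spine lemmas -/

lemma apps_append (h : Tm) (l₁ l₂ : List Tm) :
    Tm.apps h (l₁ ++ l₂) = Tm.apps (Tm.apps h l₁) l₂ := by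
  induction l₁ generalizing h with
  | nil => rfl
  | cons x xs ih => simp [Tm.apps, ih]

def Tm.headName : Tm → ℕ
  | .name n => n
  | .dot a _ => a.headName

def Tm.args : Tm → List Tm
  | .name _ => []
  | .dot a b => a.args ++ [b]

lemma headName_apps (h : Tm) (ts : List Tm) :
    (Tm.apps h ts).headName = h.headName := by
  induction ts generalizing h with
  | nil => rfl
  | cons x xs ih => simpa [Tm.apps, Tm.headName] using ih (h.dot x)

lemma args_apps (h : Tm) (ts : List Tm) :
    (Tm.apps h ts).args = h.args ++ ts := by
  induction ts generalizing h with
  | nil => simp [Tm.apps]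
  | cons x xs ih => simp [Tm.apps, ih (h.dot x), Tm.args]

lemma apps_eta (t : Tm) : Tm.apps (.name t.headName) t.args = t := by
  induction t with
  | name n => rfl
  | dot a b iha ihb =>
      show Tm.apps _ (a.args ++ [b]) = _
      rw [apps_append]
      simp [Tm.headName, Tm.args] at *
      rw [iha]
      rfl

lemma apps_name_inj {h h' : ℕ} {ts ts' : List Tm}
    (e : Tm.apps (.name h) ts = Tm.apps (.name h') ts') : h = h' ∧ ts = ts' := by
  constructor
  · have := congrArg Tm.headName e; simpa [headName_apps, Tm.headName] using this
  · have := congrArg Tm.args e; simpa [args_apps, Tm.args] using this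

def Tm.size : Tm → ℕ
  | .name _ => 1
  | .dot a b => a.size + b.size + 1

lemma ne_dotdot_left (M z s : Tm) : ((M.dot z).dot s) ≠ z := by
  intro e
  have : z.size < ((M.dot z).dot s).size := by simp [Tm.size]; omega
  rw [e] at this; omega

lemma hasName_headName (t : Tm) : t.HasName t.headName := by
  induction t with
  | name n => rfl
  | dot a b iha ihb => exact Or.inl iha

lemma hasName_apps {h : Tm} {ts : List Tm} {m : ℕ} :
    (Tm.apps h ts).HasName m ↔ h.HasName m ∨ ∃ s ∈ ts, s.HasName m := by
  induction ts generalizing h with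
  | nil => simp [Tm.apps]
  | cons x xs ih =>
      simp [Tm.apps, ih (h := h.dot x), Tm.HasName]
      tauto
/-! ### Determinism and counted steps -/

lemma step_mono {P P' : Program} (hPP : P ⊆ P') {t u : Tm} (h : Step P t u) :
    Step P' t u := by
  obtain ⟨r, hr, ts, h1, h2, h3⟩ := h
  exact ⟨r, hPP hr, ts, h1, h2, h3⟩

lemma step_det {P : Program} (hP : P.Wf) {t u v : Tm}
    (h1 : Step P t u) (h2 : Step P t v) : u = v := by
  obtain ⟨r1, hr1, ts1, hl1, he1, hi1⟩ := h1
  obtain ⟨r2, hr2, ts2, hl2, he2, hi2⟩ := h2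
  obtain ⟨hh, hts⟩ := apps_name_inj (he1 ▸ he2)
  have : r1 = r2 := hP.2 r1 hr1 r2 hr2 hh
  subst this; subst hts
  rw [hi1] at hi2; exact Option.some.inj hi2

inductive StepsN (P : Program) : ℕ → Tm → Tm → Prop
  | refl (t : Tm) : StepsN P 0 t t
  | head {t u v : Tm} {n : ℕ} (h : Step P t u) (hs : StepsN P n u v) : StepsN P (n + 1) t v

lemma stepsN_mono {P P' : Program} (hPP : P ⊆ P') {n : ℕ} {t u : Tm}
    (h : StepsN P n t u) : StepsN P' n t u := by
  induction h with
  | refl t => exact .refl t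
  | head h _ ih => exact .head (step_mono hPP h) ih

lemma stepsN_trans {P : Program} {m n : ℕ} {t u v : Tm}
    (h1 : StepsN P m t u) (h2 : StepsN P n u v) : StepsN P (m + n) t v := by
  induction h1 with
  | refl t => simpa using h2
  | @head t' u' v' m' h _ ih =>
      have : m' + 1 + n = (m' + n) + 1 := by omega
      rw [this]
      exact .head h (ih h2)

lemma steps_iff_stepsN {P : Program} {t u : Tm} :
    Steps P t u ↔ ∃ n, StepsN P n t u := by
  constructor
  · intro h
    induction h with
    | refl => exact ⟨0, .refl t⟩
    | tail _ hstep ih =>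
        obtain ⟨n, hn⟩ := ih
        exact ⟨n + 1, by simpa using stepsN_trans hn (.head hstep (.refl _))⟩
  · rintro ⟨n, hn⟩
    induction hn with
    | refl t => exact .refl
    | head h _ ih => exact .head h ih


lemma stepsN_steps {P : Program} {n : ℕ} {t u : Tm}
    (h : StepsN P n t u) : Steps P t u := steps_iff_stepsN.2 ⟨n, h⟩

lemma stepsN_transGen {P : Program} {n : ℕ} (hn : 1 ≤ n) {t u : Tm}
    (h : StepsN P n t u) : Relation.TransGen (Step P) t u := by
  cases h with
  | refl => omega
  | head h hs =>
      exact Relation.TransGen.head' h (stepsN_steps hs)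

lemma transGen_stepsN {P : Program} {t u : Tm}
    (h : Relation.TransGen (Step P) t u) : ∃ n, 1 ≤ n ∧ StepsN P n t u := by
  induction h with
  | single hstep => exact ⟨1, le_refl 1, .head hstep (.refl _)⟩
  | tail _ hstep ih =>
      obtain ⟨n, h1, hn⟩ := ih
      exact ⟨n + 1, by omega, by simpa using stepsN_trans hn (.head hstep (.refl _))⟩

lemma stepsN_final_det {P : Program} (hP : P.Wf) {n : ℕ} {t F u : Tm}
    (h : StepsN P n t F) (hF : Final P F) (hstep : Step P t u) :
    ∃ m, m < n ∧ StepsN P m u F := by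
  cases h with
  | refl => exact absurd ⟨u, hstep⟩ hF
  | head h hs => exact ⟨_, Nat.lt_succ_self _, (step_det hP h hstep) ▸ hs⟩

lemma stepsN_final_transGen {P : Program} (hP : P.Wf) {n : ℕ} {t F u : Tm}
    (h : StepsN P n t F) (hF : Final P F) (hsteps : Relation.TransGen (Step P) t u) :
    ∃ m, m < n ∧ StepsN P m u F := by
  induction hsteps with
  | single hstep => exact stepsN_final_det hP h hF hstep
  | tail _ hstep ih =>
      obtain ⟨m, hm, hms⟩ := ih
      obtain ⟨m', hm', hms'⟩ := stepsN_final_det hP hms hF hstep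
      exact ⟨m', by omega, hms'⟩
/-! ### The replacement relation and instantiation lemmas -/

inductive RepRel (M N : Tm) : Tm → Tm → Prop
  | refl (t : Tm) : RepRel M N t t
  | base : RepRel M N M N
  | dot {a a' b b' : Tm} (ha : RepRel M N a a') (hb : RepRel M N b b') :
      RepRel M N (a.dot b) (a'.dot b')

lemma rel_spine {M N t t' : Tm} (h : RepRel M N t t') :
    (∃ as as', List.Forall₂ (RepRel M N) as as' ∧ t = Tm.apps M as ∧ t' = Tm.apps N as') ∨
    (∃ (hd : ℕ) (ts ts' : List Tm), List.Forall₂ (RepRel M N) ts ts' ∧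
      t = Tm.apps (.name hd) ts ∧ t' = Tm.apps (.name hd) ts') := by
  induction h with
  | refl t =>
      right
      refine ⟨t.headName, t.args, t.args, ?_, (apps_eta t).symm, (apps_eta t).symm⟩
      exact List.forall₂_same.2 fun x _ => RepRel.refl x
  | base => exact Or.inl ⟨[], [], List.Forall₂.nil, rfl, rfl⟩
  | @dot a a' b b' ha hb ih _ =>
      rcases ih with ⟨as, as', hrel, rfl, rfl⟩ | ⟨hd, ts, ts', hrel, rfl, rfl⟩
      · left
        refine ⟨as ++ [b], as' ++ [b'], ?_, by rw [apps_append]; rfl, by rw [apps_append]; rfl⟩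
        exact List.rel_append hrel (List.Forall₂.cons hb List.Forall₂.nil)
      · right
        refine ⟨hd, ts ++ [b], ts' ++ [b'], ?_, by rw [apps_append]; rfl, by rw [apps_append]; rfl⟩
        exact List.rel_append hrel (List.Forall₂.cons hb List.Forall₂.nil)

lemma forall₂_get? {R : Tm → Tm → Prop} {l l' : List Tm} (h : List.Forall₂ R l l')
    {n : ℕ} {a : Tm} (ha : l[n]? = some a) : ∃ b, l'[n]? = some b ∧ R a b := by
  induction h generalizing n with
  | nil => simp at ha
  | cons hR _ ih =>
      cases n with
      | zero => exact ⟨_, rfl, by simpa using (by simpa using ha) ▸ hR⟩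
      | succ n => exact ih (by simpa using ha)

lemma inst_isSome {rhs : Rhs} {ts : List Tm} (h : ∀ v, rhs.HasVar v → v < ts.length) :
    ∃ u, rhs.inst ts = some u := by
  induction rhs with
  | name n => exact ⟨_, rfl⟩
  | var v =>
      have := h v (by rfl)
      exact ⟨_, List.getElem?_eq_getElem this⟩
  | dot a b iha ihb =>
      obtain ⟨ua, ha⟩ := iha fun v hv => h v (Or.inl hv)
      obtain ⟨ub, hb⟩ := ihb fun v hv => h v (Or.inr hv)
      exact ⟨ua.dot ub, by simp [Rhs.inst, ha, hb]⟩

lemma inst_rel {M N : Tm} {ts ts' : List Tm} (h : List.Forall₂ (RepRel M N) ts ts')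
    {rhs : Rhs} {u : Tm} (hu : rhs.inst ts = some u) :
    ∃ u', rhs.inst ts' = some u' ∧ RepRel M N u u' := by
  induction rhs generalizing u with
  | name n =>
      simp only [Rhs.inst] at hu ⊢
      exact ⟨u, hu, RepRel.refl u⟩
  | var v => exact forall₂_get? (n := v) h hu
  | dot a b iha ihb =>
      simp only [Rhs.inst, Option.bind_eq_bind, Option.bind_eq_some_iff] at hu
      obtain ⟨ua, ha, ub, hb, h3⟩ := hu
      have h3 : u = ua.dot ub := by simpa using h3.symm
      subst h3
      obtain ⟨ua', ha', hra⟩ := iha ha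
      obtain ⟨ub', hb', hrb⟩ := ihb hb
      exact ⟨ua'.dot ub', by simp [Rhs.inst, ha', hb'], RepRel.dot hra hrb⟩
/-! ### Simultaneous substitution of two names, and freshness -/

def Tm.sub2 (c₁ c₂ : ℕ) (a b : Tm) : Tm → Tm
  | .name n => if n = c₁ then a else if n = c₂ then b else .name n
  | .dot p q => .dot (Tm.sub2 c₁ c₂ a b p) (Tm.sub2 c₁ c₂ a b q)

lemma sub2_noName {c₁ c₂ : ℕ} {a b t : Tm} (h1 : ¬ t.HasName c₁) (h2 : ¬ t.HasName c₂) :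
    Tm.sub2 c₁ c₂ a b t = t := by
  induction t with
  | name n =>
      simp only [Tm.HasName] at h1 h2
      simp [Tm.sub2, h1, h2]
  | dot p q ihp ihq =>
      simp only [Tm.HasName] at h1 h2
      push_neg at h1 h2
      simp [Tm.sub2, ihp h1.1 h2.1, ihq h1.2 h2.2]

lemma sub2_apps (c₁ c₂ : ℕ) (a b h : Tm) (ts : List Tm) :
    Tm.sub2 c₁ c₂ a b (Tm.apps h ts) = Tm.apps (Tm.sub2 c₁ c₂ a b h) (ts.map (Tm.sub2 c₁ c₂ a b)) := by
  induction ts generalizing h with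
  | nil => rfl
  | cons x xs ih => simpa [Tm.apps, Tm.sub2] using ih (h.dot x)

lemma inst_sub2 {c₁ c₂ : ℕ} {a b : Tm} {rhs : Rhs} (hc1 : ¬ rhs.HasName c₁)
    (hc2 : ¬ rhs.HasName c₂) {ts : List Tm} {u : Tm} (hu : rhs.inst ts = some u) :
    rhs.inst (ts.map (Tm.sub2 c₁ c₂ a b)) = some (Tm.sub2 c₁ c₂ a b u) := by
  induction rhs generalizing u with
  | name n =>
      simp only [Rhs.inst] at hu
      cases hu
      simp only [Rhs.HasName] at hc1 hc2
      simp [Rhs.inst, Tm.sub2, hc1, hc2]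
  | var v =>
      simp only [Rhs.inst] at hu ⊢
      rw [List.getElem?_map, hu]; rfl
  | dot p q ihp ihq =>
      simp only [Rhs.HasName] at hc1 hc2
      push_neg at hc1 hc2
      simp only [Rhs.inst, Option.bind_eq_bind, Option.bind_eq_some_iff] at hu ⊢
      obtain ⟨ua, ha, ub, hb, h3⟩ := hu
      have h3 : u = ua.dot ub := by simpa using h3.symm
      subst h3
      exact ⟨_, ihp hc1.1 hc2.1 ha, _, ihq hc1.2 hc2.2 hb, rfl⟩

lemma step_sub2 {P : Program} {c₁ c₂ : ℕ} {a b : Tm}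
    (hc1 : ¬ P.HasName c₁) (hc2 : ¬ P.HasName c₂) {t u : Tm} (h : Step P t u) :
    Step P (Tm.sub2 c₁ c₂ a b t) (Tm.sub2 c₁ c₂ a b u) := by
  obtain ⟨r, hr, ts, hl, he, hi⟩ := h
  refine ⟨r, hr, ts.map (Tm.sub2 c₁ c₂ a b), by simpa using hl, ?_, ?_⟩
  · subst he
    rw [sub2_apps]
    have h1 : r.head ≠ c₁ := fun e => hc1 ⟨r, hr, Or.inl e⟩
    have h2 : r.head ≠ c₂ := fun e => hc2 ⟨r, hr, Or.inl e⟩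
    simp [Tm.sub2, h1, h2]
  · exact inst_sub2 (fun e => hc1 ⟨r, hr, Or.inr e⟩) (fun e => hc2 ⟨r, hr, Or.inr e⟩) hi

lemma stepsN_sub2 {P : Program} {c₁ c₂ : ℕ} {a b : Tm}
    (hc1 : ¬ P.HasName c₁) (hc2 : ¬ P.HasName c₂) {n : ℕ} {t u : Tm}
    (h : StepsN P n t u) :
    StepsN P n (Tm.sub2 c₁ c₂ a b t) (Tm.sub2 c₁ c₂ a b u) := by
  induction h with
  | refl t => exact .refl _
  | head hstep _ ih => exact .head (step_sub2 hc1 hc2 hstep) ih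

/-! ### Name bounds for freshness -/

def Tm.bound : Tm → ℕ
  | .name n => n + 1
  | .dot p q => max p.bound q.bound

def Rhs.bound : Rhs → ℕ
  | .name n => n + 1
  | .var _ => 0
  | .dot p q => max p.bound q.bound

def Rule.bound (r : Rule) : ℕ := max (r.head + 1) r.rhs.bound

def Program.bound (P : Program) : ℕ := P.sup Rule.bound

lemma Tm.hasName_lt_bound {t : Tm} {m : ℕ} (h : t.HasName m) : m < t.bound := by
  induction t with
  | name n => cases h; simp [Tm.bound]
  | dot p q ihp ihq =>
      rcases h with h | h
      · exact lt_of_lt_of_le (ihp h) (le_max_left _ _)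
      · exact lt_of_lt_of_le (ihq h) (le_max_right _ _)

lemma Rhs.hasName_lt_bound {r : Rhs} {m : ℕ} (h : r.HasName m) : m < r.bound := by
  induction r with
  | name n => cases h; simp [Rhs.bound]
  | var v => cases h
  | dot p q ihp ihq =>
      rcases h with h | h
      · exact lt_of_lt_of_le (ihp h) (le_max_left _ _)
      · exact lt_of_lt_of_le (ihq h) (le_max_right _ _)

lemma Program.hasName_lt_bound {P : Program} {m : ℕ} (h : P.HasName m) : m < P.bound := by
  obtain ⟨r, hr, h⟩ := h
  have hle : Rule.bound r ≤ P.bound := Finset.le_sup hr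
  rcases h with h | h
  · subst h; exact lt_of_lt_of_le (lt_of_lt_of_le (Nat.lt_succ_self _) (le_max_left _ _)) hle
  · exact lt_of_lt_of_le (lt_of_lt_of_le (Rhs.hasName_lt_bound h) (le_max_right _ _)) hle
/-! ### Finality and the bisimulation lemma -/

lemma final_no_rule {P' : Program} {hd : ℕ} {ts : List Tm}
    (H : ∀ r ∈ P', r.head = hd → r.arity ≠ ts.length) :
    Final P' (Tm.apps (.name hd) ts) := by
  rintro ⟨u, r, hr, ss, hl, he, _⟩
  obtain ⟨hh, hts⟩ := apps_name_inj he
  exact H r hr hh.symm (by rw [← hl, hts])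

lemma steps_ne_transGen {P : Program} {t u : Tm} (h : Steps P t u) (hne : t ≠ u) :
    Relation.TransGen (Step P) t u := by
  rcases h.cases_head with rfl | ⟨v, hv, hvu⟩
  · exact absurd rfl hne
  · exact Relation.TransGen.head' hv hvu

lemma bisim {P' : Program} (hP' : P'.Wf) {M N : Tm}
    (HAM : ∃ r ∈ P', r.head = M.headName ∧ r.arity = M.args.length + 2)
    (HAN : ∃ r ∈ P', r.head = N.headName ∧ r.arity = N.args.length + 2)
    (tgt tgt' : Tm → Tm → Tm)
    (Hred : ∀ a b : Tm, ∃ n, 1 ≤ n ∧ StepsN P' n ((M.dot a).dot b) (tgt a b))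
    (Hred' : ∀ a b : Tm, ∃ n, 1 ≤ n ∧ StepsN P' n ((N.dot a).dot b) (tgt' a b))
    (Htgt : ∀ a a' b b', RepRel M N a a' → RepRel M N b b' →
      RepRel M N (tgt a b) (tgt' a' b'))
    {t t' : Tm} (h : RepRel M N t t') :
    (Final P' t ∧ Final P' t') ∨
    ∃ u u', Relation.TransGen (Step P') t u ∧ Relation.TransGen (Step P') t' u' ∧
      RepRel M N u u' := by
  obtain ⟨rM, hrM, hrMh, hrMa⟩ := HAM
  obtain ⟨rN, hrN, hrNh, hrNa⟩ := HAN
  rcases rel_spine h with ⟨as, as', hrel, rfl, rfl⟩ | ⟨hd, ts, ts', hrel, rfl, rfl⟩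
  · -- M-headed case
    by_cases h2 : as.length = 2
    · -- exactly two extra arguments: use Hred
      match as, as', hrel with
      | [a, b], [a', b'], List.Forall₂.cons ha (List.Forall₂.cons hb List.Forall₂.nil) =>
        obtain ⟨n, hn, hsn⟩ := Hred a b
        obtain ⟨n', hn', hsn'⟩ := Hred' a' b'
        right
        exact ⟨tgt a b, tgt' a' b', stepsN_transGen hn hsn, stepsN_transGen hn' hsn',
          Htgt a a' b b' ha hb⟩
    · -- wrong number of arguments: both sides stuck
      left
      have hlen : as'.length = as.length := hrel.length_eq.symm
      constructor
      · have : Tm.apps M as = Tm.apps (.name M.headName) (M.args ++ as) := by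
          rw [apps_append, apps_eta]
        rw [this]
        refine final_no_rule fun r hr hh => ?_
        have : r = rM := hP'.2 r hr rM hrM (hh.trans hrMh.symm)
        subst this
        simp only [List.length_append]
        omega
      · have : Tm.apps N as' = Tm.apps (.name N.headName) (N.args ++ as') := by
          rw [apps_append, apps_eta]
        rw [this]
        refine final_no_rule fun r hr hh => ?_
        have : r = rN := hP'.2 r hr rN hrN (hh.trans hrNh.symm)
        subst this
        simp only [List.length_append]
        omega
  · -- name-headed case
    by_cases hr : ∃ r ∈ P', r.head = hd ∧ r.arity = ts.length
    · obtain ⟨r, hr, hh, ha⟩ := hr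
      obtain ⟨u, hu⟩ := inst_isSome (rhs := r.rhs) (ts := ts)
        (fun v hv => by rw [← ha] at *; exact hP'.1 r hr v hv)
      obtain ⟨u', hu', hrel'⟩ := inst_rel hrel hu
      right
      refine ⟨u, u', Relation.TransGen.single ⟨r, hr, ts, ha.symm, by rw [hh], hu⟩,
        Relation.TransGen.single ⟨r, hr, ts', ?_, by rw [hh], hu'⟩, hrel'⟩
      rw [← hrel.length_eq]; exact ha.symm
    · push_neg at hr
      exact Or.inl ⟨final_no_rule fun r h1 h2 => hr r h1 h2,
        final_no_rule fun r h1 h2 => by rw [← hrel.length_eq]; exact hr r h1 h2⟩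

/-! ### Termination transfer along a bisimulation -/

lemma term_transfer {P' : Program} (hP' : P'.Wf) (R : Tm → Tm → Prop)
    (hbis : ∀ t t', R t t' → (Final P' t ∧ Final P' t') ∨
      ∃ u u', Relation.TransGen (Step P') t u ∧ Relation.TransGen (Step P') t' u' ∧ R u u')
    {t t' : Tm} (hR : R t t') (ht : Terminates P' t) : Terminates P' t' := by
  obtain ⟨F, hsteps, hF⟩ := ht
  obtain ⟨n, hn⟩ := steps_iff_stepsN.1 hsteps
  clear hsteps
  suffices H : ∀ n : ℕ, ∀ t t' F : Tm, R t t' → StepsN P' n t F → Final P' F →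
      Terminates P' t' from H n t t' F hR hn hF
  clear hR hn hF
  intro n
  induction n using Nat.strong_induction_on with
  | _ n ih =>
    intro t t' F hR hn hF
    rcases hbis t t' hR with ⟨h1, h2⟩ | ⟨u, u', htu, htu', hR'⟩
    · exact ⟨t', Relation.ReflTransGen.refl, h2⟩
    · obtain ⟨m, hm, hms⟩ := stepsN_final_transGen hP' hn hF htu
      obtain ⟨G, hG1, hG2⟩ := ih m hm u u' F hR' hms hF
      exact ⟨G, Relation.ReflTransGen.trans htu'.to_reflTransGen hG1, hG2⟩
/-! ### From bisimulation data to observational equivalence -/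

lemma obsEq_of_bisim_data (P : Program) {M N : Tm}
    (HAM : ∃ r ∈ P, r.head = M.headName ∧ r.arity = M.args.length + 2)
    (HAN : ∃ r ∈ P, r.head = N.headName ∧ r.arity = N.args.length + 2)
    (tgt tgt' : Tm → Tm → Tm)
    (Hred : ∀ a b : Tm, ∃ n, 1 ≤ n ∧ StepsN P n ((M.dot a).dot b) (tgt a b))
    (Hred' : ∀ a b : Tm, ∃ n, 1 ≤ n ∧ StepsN P n ((N.dot a).dot b) (tgt' a b))
    (Htgt : ∀ a a' b b', RepRel M N a a' → RepRel M N b b' →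
      RepRel M N (tgt a b) (tgt' a' b')) : ObsEq P M N := by
  intro P' hP' hPP' X
  obtain ⟨rM, hrM, hM2⟩ := HAM
  obtain ⟨rN, hrN, hN2⟩ := HAN
  have HAM' : ∃ r ∈ P', r.head = M.headName ∧ r.arity = M.args.length + 2 :=
    ⟨rM, hPP' hrM, hM2⟩
  have HAN' : ∃ r ∈ P', r.head = N.headName ∧ r.arity = N.args.length + 2 :=
    ⟨rN, hPP' hrN, hN2⟩
  have Hred2 : ∀ a b : Tm, ∃ n, 1 ≤ n ∧ StepsN P' n ((M.dot a).dot b) (tgt a b) :=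
    fun a b => by obtain ⟨n, h1, h2⟩ := Hred a b; exact ⟨n, h1, stepsN_mono hPP' h2⟩
  have Hred2' : ∀ a b : Tm, ∃ n, 1 ≤ n ∧ StepsN P' n ((N.dot a).dot b) (tgt' a b) :=
    fun a b => by obtain ⟨n, h1, h2⟩ := Hred' a b; exact ⟨n, h1, stepsN_mono hPP' h2⟩
  have hbis := fun t t' (h : RepRel M N t t') =>
    bisim hP' HAM' HAN' tgt tgt' Hred2 Hred2' Htgt h
  have hrel : RepRel M N (X.dot M) (X.dot N) := RepRel.dot (RepRel.refl X) RepRel.base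
  constructor
  · exact fun ht => term_transfer hP' (RepRel M N) hbis hrel ht
  · refine fun ht => term_transfer hP' (fun t t' => RepRel M N t' t) ?_ hrel ht
    intro t t' h
    rcases hbis t' t h with ⟨h1, h2⟩ | ⟨u, u', h1, h2, h3⟩
    · exact Or.inl ⟨h2, h1⟩
    · exact Or.inr ⟨u', u, h2, h1, h3⟩

lemma headAr_of_steps {P : Program} {M z s v : Tm} (h : Steps P ((M.dot z).dot s) v)
    (hne : (M.dot z).dot s ≠ v) :
    ∃ r ∈ P, r.head = M.headName ∧ r.arity = M.args.length + 2 := by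
  rcases h.cases_head with rfl | ⟨u, hu, _⟩
  · exact absurd rfl hne
  · obtain ⟨r, hr, ts, hl, he, _⟩ := hu
    refine ⟨r, hr, ?_, ?_⟩
    · have := congrArg Tm.headName he
      simpa [Tm.headName, headName_apps] using this.symm
    · have := congrArg Tm.args he
      simp [Tm.args, args_apps] at this
      rw [← hl, ← this]
      simp

/-! ### The zero case -/

lemma zero_step {P : Program} (hZero : zeroRule ∈ P) (a b : Tm) :
    Step P (((Tm.name 0).dot a).dot b) a :=
  ⟨zeroRule, hZero, [a, b], rfl, rfl, by simp [zeroRule, Rhs.inst]⟩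

lemma succ_step {P : Program} (hS : succRule ∈ P) (x a b : Tm) :
    Step P (((((Tm.name 1).dot x).dot a).dot b)) (b.dot x) :=
  ⟨succRule, hS, [x, a, b], rfl, rfl, by simp [succRule, Rhs.inst]⟩

lemma obsEq_zero (P : Program) (hZero : zeroRule ∈ P) (M : Tm)
    (hz : ∀ z s : Tm, Steps P ((M.dot z).dot s) z) : ObsEq P M (numeral 0) := by
  refine obsEq_of_bisim_data P
    (headAr_of_steps (hz (.name 0) (.name 0)) (ne_dotdot_left _ _ _))
    ⟨zeroRule, hZero, rfl, rfl⟩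
    (fun a _ => a) (fun a _ => a) ?_ ?_ ?_
  · intro a b
    exact transGen_stepsN (steps_ne_transGen (hz a b) (ne_dotdot_left _ _ _))
  · intro a b
    exact ⟨1, le_refl 1, .head (zero_step hZero a b) (.refl a)⟩
  · exact fun a a' b b' ha _ => ha
/-! ### The successor case, step 1: `M ≈ S.x` -/

lemma obsEq_succ_S (P : Program) (hS : succRule ∈ P) (M x : Tm)
    (hs : ∀ z s : Tm, Steps P ((M.dot z).dot s) (s.dot x)) :
    ObsEq P M ((Tm.name 1).dot x) := by
  set c₁ := max P.bound (max M.bound x.bound) with hc₁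
  set c₂ := c₁ + 1 with hc₂
  have hMb : M.bound ≤ c₁ := le_trans (le_max_left _ _) (le_max_right _ _)
  have hxb : x.bound ≤ c₁ := le_trans (le_max_right _ _) (le_max_right _ _)
  have hPb : P.bound ≤ c₁ := le_max_left _ _
  have hM1 : ¬ M.HasName c₁ := fun h => by have := Tm.hasName_lt_bound h; omega
  have hM2 : ¬ M.HasName c₂ := fun h => by have := Tm.hasName_lt_bound h; omega
  have hx1 : ¬ x.HasName c₁ := fun h => by have := Tm.hasName_lt_bound h; omega
  have hx2 : ¬ x.HasName c₂ := fun h => by have := Tm.hasName_lt_bound h; omega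
  have hPc1 : ¬ P.HasName c₁ := fun h => by have := Program.hasName_lt_bound h; omega
  have hPc2 : ¬ P.HasName c₂ := fun h => by have := Program.hasName_lt_bound h; omega
  have hMhead : M.headName < c₂ := by
    have := Tm.hasName_lt_bound (hasName_headName M); omega
  refine obsEq_of_bisim_data P ?_ ⟨succRule, hS, rfl, rfl⟩
    (fun _ b => b.dot x) (fun _ b => b.dot x) ?_ ?_ ?_
  · -- arity of M
    refine headAr_of_steps (hs (.name c₂) (.name c₂)) fun e => ?_
    have := congrArg Tm.headName e
    simp [Tm.headName] at this
    omega
  · -- Hred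
    intro a b
    have h0 : Steps P ((M.dot (.name c₁)).dot (.name c₂)) ((Tm.name c₂).dot x) :=
      hs _ _
    have hne : (M.dot (Tm.name c₁)).dot (.name c₂) ≠ (Tm.name c₂).dot x := fun e => by
      have := congrArg Tm.headName e
      simp [Tm.headName] at this
      omega
    obtain ⟨n, hn1, hsn⟩ := transGen_stepsN (steps_ne_transGen h0 hne)
    have key := stepsN_sub2 (a := a) (b := b) hPc1 hPc2 hsn
    have e1 : Tm.sub2 c₁ c₂ a b ((M.dot (Tm.name c₁)).dot (.name c₂)) = (M.dot a).dot b := by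
      show ((Tm.sub2 c₁ c₂ a b M).dot _).dot _ = _
      rw [sub2_noName hM1 hM2]
      simp [Tm.sub2, show c₂ ≠ c₁ by omega]
    have e2 : Tm.sub2 c₁ c₂ a b ((Tm.name c₂).dot x) = b.dot x := by
      show (Tm.sub2 c₁ c₂ a b (.name c₂)).dot (Tm.sub2 c₁ c₂ a b x) = _
      rw [sub2_noName hx1 hx2]
      simp [Tm.sub2, show c₂ ≠ c₁ by omega]
    rw [e1, e2] at key
    exact ⟨n, hn1, key⟩
  · -- Hred'
    intro a b
    exact ⟨1, le_refl 1, .head (succ_step hS x a b) (.refl _)⟩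
  · exact fun a a' b b' _ hb => RepRel.dot hb (RepRel.refl x)
/-! ### Fresh-rule extension: congruence of observational equivalence -/

def Tm.toRhs : Tm → Rhs
  | .name n => .name n
  | .dot a b => .dot a.toRhs b.toRhs

lemma toRhs_noVar (t : Tm) (v : ℕ) : ¬ t.toRhs.HasVar v := by
  induction t with
  | name n => simp [Tm.toRhs, Rhs.HasVar]
  | dot a b iha ihb => rintro (h | h) <;> [exact iha h; exact ihb h]

lemma toRhs_inst (t : Tm) (ts : List Tm) : t.toRhs.inst ts = some t := by
  induction t with
  | name n => rfl
  | dot a b iha ihb => simp [Tm.toRhs, Rhs.inst, iha, ihb]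

lemma toRhs_hasName {t : Tm} {m : ℕ} (h : t.toRhs.HasName m) : t.HasName m := by
  induction t with
  | name n => exact h
  | dot a b iha ihb => rcases h with h | h; exacts [Or.inl (iha h), Or.inr (ihb h)]

lemma inst_noName {c : ℕ} {rhs : Rhs} (hc : ¬ rhs.HasName c) {ts : List Tm}
    (hts : ∀ s ∈ ts, ¬ s.HasName c) {u : Tm} (hu : rhs.inst ts = some u) :
    ¬ u.HasName c := by
  induction rhs generalizing u with
  | name n =>
      simp only [Rhs.inst] at hu; cases hu
      exact fun h => hc h
  | var v =>
      simp only [Rhs.inst] at hu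
      exact hts u (List.mem_of_getElem? hu)
  | dot a b iha ihb =>
      simp only [Rhs.HasName] at hc
      push_neg at hc
      simp only [Rhs.inst, Option.bind_eq_bind, Option.bind_eq_some_iff] at hu
      obtain ⟨ua, ha, ub, hb, h3⟩ := hu
      have h3 : u = ua.dot ub := by simpa using h3.symm
      subst h3
      rintro (h | h)
      · exact iha hc.1 ha h
      · exact ihb hc.2 hb h

lemma step_noName {P : Program} {c : ℕ} (hc : ¬ P.HasName c) {t u : Tm}
    (ht : ¬ t.HasName c) (h : Step P t u) : ¬ u.HasName c := by
  obtain ⟨r, hr, ts, hl, he, hi⟩ := h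
  refine inst_noName (fun h => hc ⟨r, hr, Or.inr h⟩) ?_ hi
  intro s hsts hsc
  exact ht (he ▸ hasName_apps.2 (Or.inr ⟨s, hsts, hsc⟩))

lemma step_insert_fresh {P' : Program} {r : Rule} (hc : ¬ P'.HasName r.head)
    {t u : Tm} (ht : ¬ t.HasName r.head) (h : Step (insert r P') t u) :
    Step P' t u := by
  obtain ⟨r', hr', ts, hl, he, hi⟩ := h
  rcases Finset.mem_insert.1 hr' with rfl | hr'
  · exact absurd (he ▸ hasName_apps.2 (Or.inl rfl)) ht
  · exact ⟨r', hr', ts, hl, he, hi⟩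

lemma terminates_insert_fresh_iff {P' : Program} {r : Rule} (hc : ¬ P'.HasName r.head)
    {t : Tm} (ht : ¬ t.HasName r.head) :
    Terminates (insert r P') t ↔ Terminates P' t := by
  have hsub : P' ⊆ insert r P' := Finset.subset_insert _ _
  constructor
  · rintro ⟨F, hsteps, hF⟩
    refine ⟨F, ?_, fun ⟨u, hu⟩ => hF ⟨u, step_mono hsub hu⟩⟩
    clear hF
    induction hsteps using Relation.ReflTransGen.head_induction_on with
    | refl => exact Relation.ReflTransGen.refl
    | head hstep _ ih =>
        rename_i a b _
        have h1 : Step P' a b := step_insert_fresh hc ht hstep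
        exact Relation.ReflTransGen.head h1 (ih (step_noName hc ht h1))
  · rintro ⟨F, hsteps, hF⟩
    have hFree : ¬ F.HasName r.head := by
      clear hF
      induction hsteps using Relation.ReflTransGen.head_induction_on with
      | refl => exact ht
      | head hstep _ ih => exact ih (step_noName hc ht hstep)
    refine ⟨F, Relation.ReflTransGen.mono (fun a b h => step_mono hsub h) _ _ hsteps, ?_⟩
    rintro ⟨u, hu⟩
    exact hF ⟨u, step_insert_fresh hc hFree hu⟩
  
lemma step_terminates_iff {P : Program} (hP : P.Wf) {t u : Tm} (h : Step P t u) :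
    Terminates P t ↔ Terminates P u := by
  constructor
  · rintro ⟨F, hsteps, hF⟩
    rcases hsteps.cases_head with rfl | ⟨v, hv, hvF⟩
    · exact absurd ⟨u, h⟩ hF
    · exact ⟨F, (step_det hP hv h) ▸ hvF, hF⟩
  · rintro ⟨F, hsteps, hF⟩
    exact ⟨F, Relation.ReflTransGen.head h hsteps, hF⟩

lemma obsEq_congr_S {P : Program} {x y : Tm} (h : ObsEq P x y) :
    ObsEq P ((Tm.name 1).dot x) ((Tm.name 1).dot y) := by
  intro P' hP' hPP' X
  set c := max P'.bound (max X.bound (max x.bound y.bound)) + 2 with hcdef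
  have hcP' : ¬ P'.HasName c := fun h => by have := Program.hasName_lt_bound h; omega
  have hcX : ¬ X.HasName c := fun h => by have := Tm.hasName_lt_bound h; omega
  have hcx : ¬ x.HasName c := fun h => by have := Tm.hasName_lt_bound h; omega
  have hcy : ¬ y.HasName c := fun h => by have := Tm.hasName_lt_bound h; omega
  have hcge : 2 ≤ c := Nat.le_add_left 2 _
  have hc1 : (1 : ℕ) ≠ c := by
    intro e
    rw [← e] at hcge
    exact absurd hcge (by norm_num)
  set newRule : Rule := ⟨c, 1, Rhs.dot X.toRhs (Rhs.dot (.name 1) (.var 0))⟩ with hnr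
  set P'' : Program := insert newRule P' with hP''def
  have hsub : P' ⊆ P'' := Finset.subset_insert _ _
  have hwf : P''.Wf := by
    constructor
    · intro r hr v hv
      rcases Finset.mem_insert.1 hr with rfl | hr
      · rcases hv with hv | hv
        · exact absurd hv (toRhs_noVar X v)
        · rcases hv with hv | hv
          · exact absurd hv (by simp [Rhs.HasVar])
          · simp only [Rhs.HasVar] at hv
            simp only [hnr]
            omega
      · exact hP'.1 r hr v hv
    · intro r₁ hr₁ r₂ hr₂ hh
      rcases Finset.mem_insert.1 hr₁ with rfl | hr₁ <;>
        rcases Finset.mem_insert.1 hr₂ with rfl | hr₂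
      · rfl
      · exact absurd ⟨r₂, hr₂, Or.inl hh.symm⟩ hcP'
      · exact absurd ⟨r₁, hr₁, Or.inl hh⟩ hcP'
      · exact hP'.2 r₁ hr₁ r₂ hr₂ hh
  have hstep : ∀ w : Tm, Step P'' ((Tm.name c).dot w) (X.dot ((Tm.name 1).dot w)) := by
    intro w
    refine ⟨newRule, Finset.mem_insert_self _ _, [w], rfl, rfl, ?_⟩
    simp [hnr, Rhs.inst, toRhs_inst]
  have hmain := h P'' hwf (fun r hr => hsub (hPP' hr)) (Tm.name c)
  have hfree : ∀ w : Tm, ¬ w.HasName c → ¬ (X.dot ((Tm.name 1).dot w)).HasName c := by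
    rintro w hw (hh | hh | hh)
    · exact hcX hh
    · exact hc1 hh
    · exact hw hh
  have l1 := step_terminates_iff hwf (hstep x)
  have l2 := step_terminates_iff hwf (hstep y)
  have l3 := terminates_insert_fresh_iff (r := newRule) hcP' (hfree x hcx)
  have l4 := terminates_insert_fresh_iff (r := newRule) hcP' (hfree y hcy)
  rw [← l3, ← l1, hmain, l2, l4]
theorem behNat_obsEq_numeral (P : Program) (hP : P.Wf)
    (hZero : zeroRule ∈ P) (hS : succRule ∈ P)
    (M : Tm) (hM : BehNat P M) :
    ∃ k : ℕ, ObsEq P M (numeral k) := by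
  induction hM with
  | zero M hz => exact ⟨0, obsEq_zero P hZero M hz⟩
  | succ M x hx hs ih =>
      obtain ⟨k, hk⟩ := ih
      refine ⟨k + 1, fun P' hP' hPP' X => ?_⟩
      exact (obsEq_succ_S P hS M x hs P' hP' hPP' X).trans
        (obsEq_congr_S hk P' hP' hPP' X)
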